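/- arXiv:2006.08951 — 2 statements merged into one kernel-verified Lean document; each statement's English description precedes it below -/
import Mathlib

section
/- Let F : ℝⁿ → ℝ be differentiable such that F + (l/2)‖·‖² is convex for some l ∈ ℝ, and γ > 0. If γ∇F(y^{t+1}) = x^t − y^{t+1} and γ∇F(y^t) = x^{t−1} − y^t, then ⟨y^{t+1} − y^t, x^t − x^{t−1}⟩ ≥ (1 − γl)‖y^{t+1} − y^t‖². -/
open Set

theorem stmt_4 {n : ℕ} (F : EuclideanSpace ℝ (Fin n) → ℝ)
    (F' : EuclideanSpace ℝ (Fin n) → EuclideanSpace ℝ (Fin n)) (l γ : ℝ) (hγ : 0 < γ)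
    (hdiff : ∀ x, HasGradientAt F (F' x) x)
    (hconv : ConvexOn ℝ Set.univ (fun x => F x + (l / 2) * ‖x‖ ^ 2))
    (x0 x1 y1 y2 : EuclideanSpace ℝ (Fin n))
    (hopt2 : γ • F' y2 = x1 - y2)
    (hopt1 : γ • F' y1 = x0 - y1) :
    (inner ℝ (y2 - y1) (x1 - x0) : ℝ) ≥ (1 - γ * l) * ‖y2 - y1‖ ^ 2 := by
  set v := y2 - y1 with hv
  set c : ℝ → EuclideanSpace ℝ (Fin n) := fun t => y1 + t • v with hc
  set φ : ℝ → ℝ := fun t => F (c t) + (l / 2) * ‖c t‖ ^ 2 with hφ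
  -- convexity of φ
  have hφconv : ConvexOn ℝ (univ : Set ℝ) φ := by
    have h := hconv.comp_affineMap (AffineMap.lineMap y1 y2 : ℝ →ᵃ[ℝ] EuclideanSpace ℝ (Fin n))
    have heq : φ = (fun x => F x + l / 2 * ‖x‖ ^ 2) ∘ (AffineMap.lineMap y1 y2) := by
      funext t
      simp only [hφ, hc, hv, Function.comp_apply, AffineMap.lineMap_apply_module']
      rw [add_comm y1 (t • (y2 - y1))]
    rw [heq]
    simpa using h
  -- derivative of the path
  have hcder : ∀ t : ℝ, HasDerivAt c v t := fun t => by
    have := ((hasDerivAt_id t).smul_const v).const_add y1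
    rw [one_smul] at this
    exact this
  -- derivative of ‖c t‖²
  have hnorm : ∀ t : ℝ, HasDerivAt (fun t => ‖c t‖ ^ 2)
      (2 * inner ℝ (c t) v) t := fun t => by
    have h1 : ∀ s : ℝ, ‖c s‖ ^ 2 = ‖y1‖ ^ 2 + 2 * (inner ℝ y1 v : ℝ) * s + ‖v‖ ^ 2 * s ^ 2 := by
      intro s
      rw [hc]
      simp only []
      rw [norm_add_sq_real, norm_smul, real_inner_smul_right]
      simp [Real.norm_eq_abs, mul_pow, sq_abs]
      ring
    have h2 : HasDerivAt (fun s : ℝ => ‖y1‖ ^ 2 + 2 * (inner ℝ y1 v : ℝ) * s + ‖v‖ ^ 2 * s ^ 2)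
        (2 * (inner ℝ y1 v : ℝ) + ‖v‖ ^ 2 * (2 * t)) t := by
      have := (((hasDerivAt_id t).const_mul (2 * (inner ℝ y1 v : ℝ))).const_add (‖y1‖ ^ 2)).add
        (((hasDerivAt_pow 2 t)).const_mul (‖v‖ ^ 2))
      simpa [mul_comm, Pi.add_def] using this
    have : HasDerivAt (fun t => ‖c t‖ ^ 2) (2 * (inner ℝ y1 v : ℝ) + ‖v‖ ^ 2 * (2 * t)) t := by
      simpa [h1] using h2
    convert this using 1
    rw [hc]; simp only []
    rw [inner_add_left, real_inner_smul_left, real_inner_comm, real_inner_self_eq_norm_sq]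
    ring
  -- derivative of φ
  have hφder : ∀ t : ℝ, HasDerivAt φ
      ((inner ℝ (F' (c t)) v : ℝ) + (l / 2) * (2 * inner ℝ (c t) v)) t := fun t => by
    have hF : HasFDerivAt F (InnerProductSpace.toDual ℝ _ (F' (c t)) :
        EuclideanSpace ℝ (Fin n) →L[ℝ] ℝ) (c t) := (hdiff (c t)).hasFDerivAt
    have hcomp := hF.comp_hasDerivAt t (hcder t)
    have : HasDerivAt (fun t => F (c t)) (inner ℝ (F' (c t)) v : ℝ) t := by
      simpa [InnerProductSpace.toDual_apply_apply, Function.comp_def] using hcomp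
    exact this.add ((hnorm t).const_mul (l / 2))
  -- monotone derivative
  have key : ((inner ℝ (F' y1) v : ℝ) + (l / 2) * (2 * inner ℝ (c 0) v)) ≤
      ((inner ℝ (F' y2) v : ℝ) + (l / 2) * (2 * inner ℝ (c 1) v)) := by
    have h0 : c 0 = y1 := by simp [hc]
    have h1 : c 1 = y2 := by simp [hc, hv]
    have hle := hφconv.le_slope_of_hasDerivAt (mem_univ (0:ℝ)) (mem_univ (1:ℝ)) one_pos
      (by simpa [h0] using hφder 0)
    have hge := hφconv.slope_le_of_hasDerivAt (mem_univ (0:ℝ)) (mem_univ (1:ℝ)) one_pos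
      (by simpa [h1] using hφder 1)
    calc _ ≤ slope φ 0 1 := by simpa [h0] using hle
    _ ≤ _ := by simpa [h1] using hge
  have h0 : c 0 = y1 := by simp [hc]
  have h1 : c 1 = y2 := by simp [hc, hv]
  rw [h0, h1] at key
  -- so ⟪F' y2 - F' y1, v⟫ ≥ -l * ‖v‖²
  have hinner : (inner ℝ (F' y2 - F' y1) v : ℝ) ≥ -(l * ‖v‖ ^ 2) := by
    have hy2 : (inner ℝ y2 v : ℝ) - inner ℝ y1 v = ‖v‖ ^ 2 := by
      rw [← inner_sub_left, ← hv, real_inner_self_eq_norm_sq]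
    rw [inner_sub_left, ge_iff_le, ← hy2]
    linarith [key]
  -- now conclude
  have hx : x1 - x0 = γ • (F' y2 - F' y1) + v := by
    rw [smul_sub, hopt1, hopt2, hv]; abel
  rw [hx, inner_add_right, real_inner_smul_right, real_inner_self_eq_norm_sq]
  rw [real_inner_comm] at hinner
  have := mul_le_mul_of_nonneg_left hinner (le_of_lt hγ)
  nlinarith [this]
end

section
/- Under the hypotheses of the previous statement, and additionally assuming ∇F is L-Lipschitz, one has ‖y^{t+1} − (x^t − x^{t−1}) − y^t‖² ≤ [(−1 + 2γl) + (1 + γL)²]‖y^{t+1} − y^t‖². -/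
theorem stmt_5 {n : ℕ} (F : EuclideanSpace ℝ (Fin n) → ℝ)
    (F' : EuclideanSpace ℝ (Fin n) → EuclideanSpace ℝ (Fin n)) (l L γ : ℝ)
    (hL : 0 < L) (hγ : 0 < γ)
    (hdiff : ∀ x, HasGradientAt F (F' x) x)
    (hconv : ConvexOn ℝ Set.univ (fun x => F x + (l / 2) * ‖x‖ ^ 2))
    (hlip : ∀ a b, ‖F' a - F' b‖ ≤ L * ‖a - b‖)
    (x0 x1 y1 y2 : EuclideanSpace ℝ (Fin n))
    (hopt2 : γ • F' y2 = x1 - y2)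
    (hopt1 : γ • F' y1 = x0 - y1) :
    ‖y2 - (x1 - x0) - y1‖ ^ 2 ≤ ((-1 + 2 * γ * l) + (1 + γ * L) ^ 2) * ‖y2 - y1‖ ^ 2 := by
  set d : EuclideanSpace ℝ (Fin n) := y2 - y1 with hd
  -- Key algebraic identity
  have key : y2 - (x1 - x0) - y1 = γ • F' y1 - γ • F' y2 := by
    have h1 : x1 = γ • F' y2 + y2 := by rw [hopt2]; abel
    have h0 : x0 = γ • F' y1 + y1 := by rw [hopt1]; abel
    rw [h1, h0]; abel
  -- the line c t = y1 + t • d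
  set c : ℝ → EuclideanSpace ℝ (Fin n) := fun t => y1 + t • d with hc
  have hcder : ∀ t : ℝ, HasDerivAt c d t := by
    intro t
    have := ((hasDerivAt_id t).smul_const d).const_add y1
    simpa [hc] using this
  set g : ℝ → ℝ := fun t => F (c t) + (l / 2) * ‖c t‖ ^ 2 with hg
  have hgder : ∀ t : ℝ,
      HasDerivAt g (inner ℝ (F' (c t)) d + (l / 2) * (2 * inner ℝ (c t) d)) t := by
    intro t
    have h1 : HasDerivAt (fun t => F (c t)) (inner ℝ (F' (c t)) d) t := by
      have hF := (hasGradientAt_iff_hasFDerivAt.mp (hdiff (c t)))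
      have := hF.comp_hasDerivAt t (hcder t)
      exact this
    have h2 : HasDerivAt (fun t => (l / 2) * ‖c t‖ ^ 2)
        ((l / 2) * (2 * inner ℝ (c t) d)) t := ((hcder t).norm_sq).const_mul (l / 2)
    exact h1.add h2
  -- convexity of g
  have hgconv : ConvexOn ℝ Set.univ g := by
    have hline : ∀ t : ℝ,
        (AffineMap.lineMap y1 y2 : ℝ →ᵃ[ℝ] EuclideanSpace ℝ (Fin n)) t = c t := by
      intro t
      simp only [AffineMap.lineMap_apply, hc, hd, vsub_eq_sub, vadd_eq_add]
      abel
    have heq : g = (fun x => F x + (l / 2) * ‖x‖ ^ 2) ∘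
        (AffineMap.lineMap y1 y2 : ℝ →ᵃ[ℝ] EuclideanSpace ℝ (Fin n)) := by
      funext t
      simp [hg, Function.comp, hline t]
    rw [heq]
    simpa using hconv.comp_affineMap (AffineMap.lineMap y1 y2)
  -- monotonicity of derivative
  have hmono : inner ℝ (F' (c 0)) d + (l / 2) * (2 * inner ℝ (c 0) d)
      ≤ inner ℝ (F' (c 1)) d + (l / 2) * (2 * inner ℝ (c 1) d) := by
    have h01 : (0 : ℝ) < 1 := one_pos
    have hA := hgconv.le_slope_of_hasDerivAt (Set.mem_univ (0:ℝ)) (Set.mem_univ (1:ℝ))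
      h01 (hgder 0)
    have hB := hgconv.slope_le_of_hasDerivAt (Set.mem_univ (0:ℝ)) (Set.mem_univ (1:ℝ))
      h01 (hgder 1)
    linarith
  have hc0 : c 0 = y1 := by simp [hc]
  have hc1 : c 1 = y2 := by simp [hc, hd]
  rw [hc0, hc1] at hmono
  -- ⟨F' y2 - F' y1, d⟩ + l ‖d‖² ≥ 0
  have hinner : (0 : ℝ) ≤ inner ℝ (F' y2 - F' y1) d + l * ‖d‖ ^ 2 := by
    have h1 : (inner ℝ (F' y2 - F' y1) d : ℝ) = inner ℝ (F' y2) d - inner ℝ (F' y1) d :=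
      inner_sub_left _ _ _
    have h2 : (inner ℝ (y2 - y1) d : ℝ) = ‖d‖ ^ 2 := by
      rw [hd]; exact real_inner_self_eq_norm_sq d
    have h3 : (inner ℝ (y2 - y1) d : ℝ) = inner ℝ y2 d - inner ℝ y1 d := inner_sub_left _ _ _
    have h4 : (inner ℝ y2 d : ℝ) - inner ℝ y1 d = ‖d‖ ^ 2 := by rw [← h3, h2]
    have h5 : l * inner ℝ y2 d - l * inner ℝ y1 d = l * ‖d‖ ^ 2 := by
      rw [← h4]; ring
    linarith [hmono]
  -- Cauchy-Schwarz + Lipschitz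
  have hCS : (inner ℝ (F' y2 - F' y1) d : ℝ) ≤ L * ‖d‖ ^ 2 := by
    calc (inner ℝ (F' y2 - F' y1) d : ℝ) ≤ ‖F' y2 - F' y1‖ * ‖d‖ := real_inner_le_norm _ _
    _ ≤ (L * ‖y2 - y1‖) * ‖d‖ :=
        mul_le_mul_of_nonneg_right (hlip y2 y1) (norm_nonneg d)
    _ = L * ‖d‖ ^ 2 := by rw [← hd]; ring
  have hlL : (0 : ℝ) ≤ (l + L) * ‖d‖ ^ 2 := by nlinarith
  -- bound the LHS
  have hnorm : ‖y2 - (x1 - x0) - y1‖ ≤ γ * L * ‖d‖ := by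
    rw [key]
    have heq2 : γ • F' y1 - γ • F' y2 = γ • (F' y1 - F' y2) := (smul_sub γ _ _).symm
    rw [heq2, norm_smul]
    have h1 : ‖F' y1 - F' y2‖ ≤ L * ‖y1 - y2‖ := hlip y1 y2
    have h2 : ‖y1 - y2‖ = ‖d‖ := by rw [hd, ← norm_neg]; congr 1; abel
    rw [h2] at h1
    calc |γ| * ‖F' y1 - F' y2‖ = γ * ‖F' y1 - F' y2‖ := by rw [abs_of_pos hγ]
    _ ≤ γ * (L * ‖d‖) := mul_le_mul_of_nonneg_left h1 hγ.le
    _ = γ * L * ‖d‖ := by ring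
  have hsq : ‖y2 - (x1 - x0) - y1‖ ^ 2 ≤ (γ * L) ^ 2 * ‖d‖ ^ 2 := by
    have := pow_le_pow_left₀ (norm_nonneg (y2 - (x1 - x0) - y1)) hnorm 2
    calc ‖y2 - (x1 - x0) - y1‖ ^ 2 ≤ (γ * L * ‖d‖) ^ 2 := this
    _ = (γ * L) ^ 2 * ‖d‖ ^ 2 := by ring
  have hcoef : ((-1 + 2 * γ * l) + (1 + γ * L) ^ 2) * ‖d‖ ^ 2
      = (γ * L) ^ 2 * ‖d‖ ^ 2 + 2 * γ * ((l + L) * ‖d‖ ^ 2) := by ring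
  have h2γ : (0 : ℝ) ≤ 2 * γ * ((l + L) * ‖d‖ ^ 2) :=
    mul_nonneg (by linarith) hlL
  linarith
end
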